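/- Let a_1, a_2, a_3, a_4 > 0 satisfy ((a_3 a_4 / a_2) − (a_1 a_4² / a_2²))·λ > 1 for every eigenvalue λ of Q_S for every nonempty S ⊆ V, and set b_1 = a_3 a_4 / a_2 and b_2 = a_1 a_4² / a_2² (so b_1 > b_2 > 0). Define the set function f_4 on subsets of V by f_4(∅) = 0 and, for nonempty S, f_4(S) = C_4 − tr( Q_S⁻² (b_1 Q_S − I) ((b_1 − b_2) Q_S − I)⁻¹ ), where C_4 = 2·max over single nodes s ∈ V of tr( Q_{{s}}⁻² (b_1 Q_{{s}} − I) ((b_1 − b_2) Q_{{s}} − I)⁻¹ ). Then f_4 is non-decreasing and submodular. -/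

import Mathlib

set_option linter.unusedSectionVars false

open Matrix Polynomial

variable {m : Type*} [Fintype m] [DecidableEq m]

lemma auxEvalCharpoly (M : Matrix m m ℝ) (t : ℝ) :
    M.charpoly.eval t = (t • (1 : Matrix m m ℝ) - M).det := by
  have h : M.charpoly.eval t = ((Matrix.charmatrix M).map (Polynomial.evalRingHom t)).det := by
    rw [Matrix.charpoly]
    simpa using (RingHom.map_det (Polynomial.evalRingHom t) (Matrix.charmatrix M))
  rw [h]
  congr 1
  ext i j
  by_cases hij : i = j
  · subst hij
    simp [Matrix.charmatrix_apply_eq, Matrix.one_apply]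
  · simp [Matrix.charmatrix_apply_ne _ _ _ hij, Matrix.one_apply_ne hij]

lemma auxMemRoots {M : Matrix m m ℝ} {t : ℝ} {v : m → ℝ} (hv : v ≠ 0)
    (h : M *ᵥ v = t • v) : t ∈ M.charpoly.roots := by
  rw [Polynomial.mem_roots']
  refine ⟨M.charpoly_monic.ne_zero, ?_⟩
  rw [Polynomial.IsRoot, auxEvalCharpoly]
  rw [← Matrix.exists_mulVec_eq_zero_iff]
  refine ⟨v, hv, ?_⟩
  rw [Matrix.sub_mulVec, Matrix.smul_mulVec, Matrix.one_mulVec, h, sub_self]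

lemma auxPosDefOfPosSemidef {M : Matrix m m ℝ} (h : M.PosSemidef) (hd : M.det ≠ 0) :
    M.PosDef := by
  refine posDef_iff_dotProduct_mulVec.mpr ⟨h.1, fun x hx => ?_⟩
  rcases (h.dotProduct_mulVec_nonneg x).lt_or_eq with hlt | heq
  · exact hlt
  · exfalso
    have hx0 : M *ᵥ x = 0 := (h.dotProduct_mulVec_zero_iff x).mp heq.symm
    exact hd (Matrix.exists_mulVec_eq_zero_iff.mp ⟨x, hx, hx0⟩)

lemma auxPosDefSmulSubOne {M : Matrix m m ℝ} (hM : M.IsHermitian) {c : ℝ} (hc : 0 < c)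
    (hroots : ∀ t ∈ M.charpoly.roots, 1 < c * t) :
    (c • M - 1).PosDef := by
  have hH : (c • M - 1).IsHermitian := by
    unfold Matrix.IsHermitian
    rw [Matrix.conjTranspose_sub, Matrix.conjTranspose_smul, Matrix.conjTranspose_one, hM.eq,
      star_trivial]
  have heigen : ∀ (t : ℝ) (v : m → ℝ), v ≠ 0 → (c • M - 1) *ᵥ v = t • v → 0 < t := by
    intro t v hv htv
    have hMv : M *ᵥ v = ((t + 1) / c) • v := by
      have h1 : c • (M *ᵥ v) = (t + 1) • v := by
        have := htv
        rw [Matrix.sub_mulVec, Matrix.smul_mulVec, Matrix.one_mulVec, sub_eq_iff_eq_add]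
          at this
        rw [this, add_smul, one_smul]
      have := congrArg (fun w => (1 / c) • w) h1
      simp only [smul_smul, one_div_mul_cancel hc.ne', one_smul] at this
      rw [this]
      congr 1
      ring
    have hroot := hroots _ (auxMemRoots hv hMv)
    rw [mul_div_cancel₀ _ hc.ne'] at hroot
    linarith
  have hPSD : (c • M - 1).PosSemidef := by
    refine hH.posSemidef_iff_eigenvalues_nonneg.mpr fun i => le_of_lt ?_
    refine heigen _ _ ?_ (hH.mulVec_eigenvectorBasis i)
    have h0 := hH.eigenvectorBasis.orthonormal.ne_zero i
    intro hcontra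
    apply h0
    ext k
    exact congrFun hcontra k
  refine auxPosDefOfPosSemidef hPSD ?_
  intro h0
  obtain ⟨v, hv, hv0⟩ := Matrix.exists_mulVec_eq_zero_iff.mpr h0
  have hMv : M *ᵥ v = (1 / c) • v := by
    have h1 : c • (M *ᵥ v) = v := by
      rw [Matrix.sub_mulVec, Matrix.smul_mulVec, Matrix.one_mulVec, sub_eq_zero] at hv0
      exact hv0
    have := congrArg (fun w => (1 / c) • w) h1
    simp only [smul_smul, one_div_mul_cancel hc.ne', one_smul] at this
    exact this
  have := hroots _ (auxMemRoots hv hMv)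
  rw [mul_one_div, div_self hc.ne'] at this
  exact lt_irrefl 1 this

lemma auxInvNonneg {M : Matrix m m ℝ} (hM : M.PosDef) (hoff : ∀ i j, i ≠ j → M i j ≤ 0) :
    ∀ i j, 0 ≤ M⁻¹ i j := by
  have hdet : IsUnit M.det := (Matrix.isUnit_iff_isUnit_det M).mp hM.isUnit
  intro i j
  set x : m → ℝ := fun k => M⁻¹ k j with hxdef
  have hMx : M *ᵥ x = fun k => (1 : Matrix m m ℝ) k j := by
    funext k
    have : (M * M⁻¹) k j = (1 : Matrix m m ℝ) k j := by
      rw [Matrix.mul_nonsing_inv _ hdet]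
    rw [← this, Matrix.mul_apply]
    simp [Matrix.mulVec, dotProduct, hxdef]
  set y : m → ℝ := fun k => max (-(x k)) 0 with hydef
  set z : m → ℝ := fun k => max (x k) 0 with hzdef
  have hy0 : ∀ k, 0 ≤ y k := fun k => le_max_right _ _
  have hz0 : ∀ k, 0 ≤ z k := fun k => le_max_right _ _
  have hxz : ∀ k, x k = z k - y k := by
    intro k
    rcases le_total (x k) 0 with h | h
    · simp [hydef, hzdef, max_eq_left, max_eq_right, h, neg_nonneg.mpr h]
    · simp [hydef, hzdef, max_eq_right h, max_eq_left (neg_nonpos.mpr h)]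
  have hyz : ∀ k, y k * z k = 0 := by
    intro k
    rcases le_total (x k) 0 with h | h
    · simp [hzdef, max_eq_right h, mul_zero]
    · simp [hydef, max_eq_right (neg_nonpos.mpr h), zero_mul]
  -- y ⬝ᵥ (M *ᵥ x) = y j
  have h1 : y ⬝ᵥ (M *ᵥ x) = y j := by
    rw [hMx]
    simp [dotProduct, Matrix.one_apply, mul_ite, mul_one, mul_zero]
  -- expand x = z - y
  have hxv : x = z - y := funext fun k => by rw [Pi.sub_apply]; exact hxz k
  have h2 : y ⬝ᵥ (M *ᵥ x) = y ⬝ᵥ (M *ᵥ z) - y ⬝ᵥ (M *ᵥ y) := by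
    rw [hxv, Matrix.mulVec_sub, dotProduct_sub]
  have h3 : y ⬝ᵥ (M *ᵥ z) ≤ 0 := by
    rw [dotProduct]
    refine Finset.sum_nonpos fun k _ => ?_
    rw [Matrix.mulVec, dotProduct, Finset.mul_sum]
    refine Finset.sum_nonpos fun l _ => ?_
    by_cases hkl : k = l
    · subst hkl
      have : y k * (M k k * z k) = M k k * (y k * z k) := by ring
      rw [this, hyz k, mul_zero]
    · have h4 : M k l * z l ≤ 0 :=
        mul_nonpos_of_nonpos_of_nonneg (hoff k l hkl) (hz0 l)
      exact mul_nonpos_of_nonneg_of_nonpos (hy0 k) h4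
  have h5 : 0 ≤ y ⬝ᵥ (M *ᵥ y) := by
    have := hM.posSemidef.dotProduct_mulVec_nonneg y
    simpa using this
  have hyj : 0 ≤ y j := hy0 j
  -- conclude y = 0
  have hy_zero : y = 0 := by
    by_contra hy
    have hpos := hM.dotProduct_mulVec_pos hy
    simp only [star_trivial] at hpos
    have : y ⬝ᵥ (M *ᵥ y) = y ⬝ᵥ (M *ᵥ z) - y j := by rw [← h1, h2]; ring
    linarith
  have : x i = z i := by rw [hxz i, hy_zero]; simp
  have hzi : 0 ≤ z i := hz0 i
  calc (0:ℝ) ≤ z i := hzi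
  _ = x i := (this).symm
  _ = M⁻¹ i j := by rw [hxdef]

lemma auxInvSub (M N : Matrix m m ℝ) (hM : IsUnit M.det) (hN : IsUnit N.det) :
    M⁻¹ - N⁻¹ = M⁻¹ * (N - M) * N⁻¹ := by
  rw [Matrix.mul_sub, Matrix.nonsing_inv_mul M hM, Matrix.sub_mul, one_mul, Matrix.mul_assoc,
    Matrix.mul_nonsing_inv N hN, Matrix.mul_one]

lemma auxMulNonneg {A B : Matrix m m ℝ} (hA : ∀ i j, 0 ≤ A i j) (hB : ∀ i j, 0 ≤ B i j) :
    ∀ i j, 0 ≤ (A * B) i j := by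
  intro i j
  rw [Matrix.mul_apply]
  exact Finset.sum_nonneg fun k _ => mul_nonneg (hA i k) (hB k j)

lemma auxMulMono {A A' B B' : Matrix m m ℝ} (hA'0 : ∀ i j, 0 ≤ A' i j)
    (hA : ∀ i j, A' i j ≤ A i j) (hB'0 : ∀ i j, 0 ≤ B' i j) (hB : ∀ i j, B' i j ≤ B i j) :
    ∀ i j, (A' * B') i j ≤ (A * B) i j := by
  intro i j
  rw [Matrix.mul_apply, Matrix.mul_apply]
  refine Finset.sum_le_sum fun k _ => ?_
  exact mul_le_mul (hA i k) (hB k j) (hB'0 k j) (le_trans (hA'0 i k) (hA i k))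

lemma auxTraceADB (A B : Matrix m m ℝ) (δ : m → ℝ) :
    Matrix.trace (A * Matrix.diagonal δ * B) = ∑ j, ∑ k, A j k * δ k * B k j := by
  rw [Matrix.trace]
  simp only [Matrix.diag_apply, Matrix.mul_apply, Matrix.diagonal_apply, mul_ite, mul_zero,
    ite_mul, zero_mul, Finset.sum_ite_eq, Finset.sum_ite_eq', Finset.mem_univ, if_true]

lemma auxTraceADBNonneg {A B : Matrix m m ℝ} {δ : m → ℝ} (hδ : ∀ k, 0 ≤ δ k)
    (hA : ∀ i j, 0 ≤ A i j) (hB : ∀ i j, 0 ≤ B i j) :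
    0 ≤ Matrix.trace (A * Matrix.diagonal δ * B) := by
  rw [auxTraceADB]
  refine Finset.sum_nonneg fun j _ => Finset.sum_nonneg fun k _ => ?_
  exact mul_nonneg (mul_nonneg (hA j k) (hδ k)) (hB k j)

lemma auxTraceADBMono {A A' B B' : Matrix m m ℝ} {δ : m → ℝ} (hδ : ∀ k, 0 ≤ δ k)
    (hA'0 : ∀ i j, 0 ≤ A' i j) (hA : ∀ i j, A' i j ≤ A i j)
    (hB'0 : ∀ i j, 0 ≤ B' i j) (hB : ∀ i j, B' i j ≤ B i j) :
    Matrix.trace (A' * Matrix.diagonal δ * B') ≤ Matrix.trace (A * Matrix.diagonal δ * B) := by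
  rw [auxTraceADB, auxTraceADB]
  refine Finset.sum_le_sum fun j _ => Finset.sum_le_sum fun k _ => ?_
  refine mul_le_mul (mul_le_mul_of_nonneg_right (hA j k) (hδ k)) (hB k j) (hB'0 k j) ?_
  exact mul_nonneg (le_trans (hA'0 j k) (hA j k)) (hδ k)

lemma auxTraceNonneg {A : Matrix m m ℝ} (h : ∀ i j, 0 ≤ A i j) : 0 ≤ A.trace := by
  rw [Matrix.trace]
  exact Finset.sum_nonneg fun i _ => h i i

lemma auxMargFormula (b2 : ℝ) (P P' W W' D D' : Matrix m m ℝ)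
    (hP : P - P' = P * D * P') (hW : W - W' = W * D' * W') :
    (Matrix.trace (P * P) + b2 * Matrix.trace (P * W))
      - (Matrix.trace (P' * P') + b2 * Matrix.trace (P' * W'))
    = Matrix.trace (P * D * (P' * P)) + Matrix.trace ((P' * P) * D * P')
      + b2 * Matrix.trace (P * D * (P' * W)) + b2 * Matrix.trace ((P' * W) * D' * W') := by
  have e1 : Matrix.trace (P * D * (P' * P)) = Matrix.trace (P * P) - Matrix.trace (P' * P) := by
    have h1 : P * D * (P' * P) = (P - P') * P := by
      rw [hP]; exact (Matrix.mul_assoc (P * D) P' P).symm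
    rw [h1, Matrix.sub_mul, Matrix.trace_sub]
  have e2 : Matrix.trace ((P' * P) * D * P') = Matrix.trace (P' * P) - Matrix.trace (P' * P') := by
    have h1 : (P' * P) * D * P' = P' * (P - P') := by
      rw [hP, ← Matrix.mul_assoc, ← Matrix.mul_assoc]
    rw [h1, Matrix.mul_sub, Matrix.trace_sub]
  have e3 : Matrix.trace (P * D * (P' * W)) = Matrix.trace (P * W) - Matrix.trace (P' * W) := by
    have h1 : P * D * (P' * W) = (P - P') * W := by
      rw [hP]; exact (Matrix.mul_assoc (P * D) P' W).symm
    rw [h1, Matrix.sub_mul, Matrix.trace_sub]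
  have e4 : Matrix.trace ((P' * W) * D' * W') = Matrix.trace (P' * W) - Matrix.trace (P' * W') := by
    have h1 : (P' * W) * D' * W' = P' * (W - W') := by
      rw [hW, ← Matrix.mul_assoc, ← Matrix.mul_assoc]
    rw [h1, Matrix.mul_sub, Matrix.trace_sub]
  rw [e1, e2, e3, e4]; ring

lemma auxMargNonneg {b2 : ℝ} (hb2 : 0 ≤ b2) {δ δ' : m → ℝ} (hδ : ∀ k, 0 ≤ δ k)
    (hδ' : ∀ k, 0 ≤ δ' k) {P P' W W' : Matrix m m ℝ}
    (hP : ∀ i j, 0 ≤ P i j) (hP' : ∀ i j, 0 ≤ P' i j)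
    (hW : ∀ i j, 0 ≤ W i j) (hW' : ∀ i j, 0 ≤ W' i j) :
    0 ≤ Matrix.trace (P * Matrix.diagonal δ * (P' * P))
      + Matrix.trace ((P' * P) * Matrix.diagonal δ * P')
      + b2 * Matrix.trace (P * Matrix.diagonal δ * (P' * W))
      + b2 * Matrix.trace ((P' * W) * Matrix.diagonal δ' * W') := by
  have t1 := auxTraceADBNonneg hδ hP (auxMulNonneg hP' hP)
  have t2 := auxTraceADBNonneg hδ (auxMulNonneg hP' hP) hP'
  have t3 := auxTraceADBNonneg hδ hP (auxMulNonneg hP' hW)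
  have t4 := auxTraceADBNonneg hδ' (auxMulNonneg hP' hW) hW'
  have := mul_nonneg hb2 t3
  have := mul_nonneg hb2 t4
  linarith

lemma auxMargCompare {b2 : ℝ} (hb2 : 0 ≤ b2) {δ δ' : m → ℝ} (hδ : ∀ k, 0 ≤ δ k)
    (hδ' : ∀ k, 0 ≤ δ' k) {PX PX' WX WX' PY PY' WY WY' : Matrix m m ℝ}
    (hPY : ∀ i j, 0 ≤ PY i j) (hPY' : ∀ i j, 0 ≤ PY' i j)
    (hWY : ∀ i j, 0 ≤ WY i j) (hWY' : ∀ i j, 0 ≤ WY' i j)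
    (hP : ∀ i j, PY i j ≤ PX i j) (hP' : ∀ i j, PY' i j ≤ PX' i j)
    (hW : ∀ i j, WY i j ≤ WX i j) (hW' : ∀ i j, WY' i j ≤ WX' i j) :
    Matrix.trace (PY * Matrix.diagonal δ * (PY' * PY))
      + Matrix.trace ((PY' * PY) * Matrix.diagonal δ * PY')
      + b2 * Matrix.trace (PY * Matrix.diagonal δ * (PY' * WY))
      + b2 * Matrix.trace ((PY' * WY) * Matrix.diagonal δ' * WY')
    ≤ Matrix.trace (PX * Matrix.diagonal δ * (PX' * PX))
      + Matrix.trace ((PX' * PX) * Matrix.diagonal δ * PX')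
      + b2 * Matrix.trace (PX * Matrix.diagonal δ * (PX' * WX))
      + b2 * Matrix.trace ((PX' * WX) * Matrix.diagonal δ' * WX') := by
  have t1 := auxTraceADBMono hδ hPY hP (auxMulNonneg hPY' hPY) (auxMulMono hPY' hP' hPY hP)
  have t2 := auxTraceADBMono hδ (auxMulNonneg hPY' hPY) (auxMulMono hPY' hP' hPY hP) hPY' hP'
  have t3 := auxTraceADBMono hδ hPY hP (auxMulNonneg hPY' hWY) (auxMulMono hPY' hP' hWY hW)
  have t4 := auxTraceADBMono hδ' (auxMulNonneg hPY' hWY) (auxMulMono hPY' hP' hWY hW) hWY' hW'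
  have h3 := mul_le_mul_of_nonneg_left t3 hb2
  have h4 := mul_le_mul_of_nonneg_left t4 hb2
  linarith
/-- The fourth-order set function `f₄(∅) = 0`,
`f₄(S) = C₄ − tr(Q_S⁻²(b₁Q_S − I)((b₁ − b₂)Q_S − I)⁻¹)` for nonempty `S`,
where `b₁ = a₃a₄/a₂`, `b₂ = a₁a₄²/a₂²`, and
`C₄ = 2·max_{s ∈ V} tr(Q_{{s}}⁻²(b₁Q_{{s}} − I)((b₁ − b₂)Q_{{s}} − I)⁻¹)`, is
non-decreasing and submodular, where `Q_S = L + D_κ D_S`. -/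
theorem setFunction_f4_monotone_submodular (n : ℕ) (hn : 1 ≤ n)
    (L : Matrix (Fin n) (Fin n) ℝ)
    (hLsymm : L.IsSymm)
    (hLoff : ∀ i j, i ≠ j → L i j ≤ 0)
    (hLrow : ∀ i, ∑ j, L i j = 0)
    (hLker : ∀ x : Fin n → ℝ, L.mulVec x = 0 ↔ ∃ c : ℝ, x = fun _ => c)
    (κ : Fin n → ℝ) (hκ : ∀ i, 0 < κ i)
    (Q : Finset (Fin n) → Matrix (Fin n) (Fin n) ℝ)
    (hQdef : ∀ S, Q S = L + Matrix.diagonal fun i => if i ∈ S then κ i else 0)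
    (hQpos : ∀ S : Finset (Fin n), S.Nonempty → (Q S).PosDef)
    (a₁ a₂ a₃ a₄ : ℝ) (ha₁ : 0 < a₁) (ha₂ : 0 < a₂) (ha₃ : 0 < a₃) (ha₄ : 0 < a₄)
    (heig : ∀ S : Finset (Fin n), S.Nonempty →
      ∀ lam ∈ (Q S).charpoly.roots,
        1 < ((a₃ * a₄ / a₂) - (a₁ * a₄ ^ 2 / a₂ ^ 2)) * lam)
    (mx : ℝ)
    (hmx : IsGreatest {x : ℝ | ∃ s : Fin n, x =
      Matrix.trace ((Q {s})⁻¹ * (Q {s})⁻¹ *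
        ((a₃ * a₄ / a₂) • Q {s} - (1 : Matrix (Fin n) (Fin n) ℝ)) *
        (((a₃ * a₄ / a₂) - (a₁ * a₄ ^ 2 / a₂ ^ 2)) • Q {s} -
          (1 : Matrix (Fin n) (Fin n) ℝ))⁻¹)} mx)
    (f₄ : Finset (Fin n) → ℝ)
    (hf0 : f₄ ∅ = 0)
    (hf : ∀ S : Finset (Fin n), S.Nonempty →
      f₄ S = 2 * mx - Matrix.trace ((Q S)⁻¹ * (Q S)⁻¹ *
        ((a₃ * a₄ / a₂) • Q S - (1 : Matrix (Fin n) (Fin n) ℝ)) *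
        (((a₃ * a₄ / a₂) - (a₁ * a₄ ^ 2 / a₂ ^ 2)) • Q S -
          (1 : Matrix (Fin n) (Fin n) ℝ))⁻¹)) :
    (∀ A B : Finset (Fin n), A ⊆ B → f₄ A ≤ f₄ B) ∧
    (∀ A B : Finset (Fin n), f₄ (A ∪ B) + f₄ (A ∩ B) ≤ f₄ A + f₄ B) := by
  set b1 := a₃ * a₄ / a₂ with hb1
  set b2 := a₁ * a₄ ^ 2 / a₂ ^ 2 with hb2
  set c := b1 - b2 with hcdef
  have hb2pos : 0 < b2 := by rw [hb2]; positivity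
  -- positivity of c
  have hc : 0 < c := by
    have hs0 : ({(⟨0, hn⟩ : Fin n)} : Finset (Fin n)).Nonempty :=
      ⟨⟨0, hn⟩, Finset.mem_singleton_self _⟩
    have hpd := hQpos _ hs0
    set i0 : Fin n := ⟨0, hn⟩
    have ht : 0 < hpd.1.eigenvalues i0 := hpd.eigenvalues_pos i0
    have hv0 : (⇑(hpd.1.eigenvectorBasis i0) : Fin n → ℝ) ≠ 0 := by
      have h0 := hpd.1.eigenvectorBasis.orthonormal.ne_zero i0
      intro hcontra; apply h0; ext k; exact congrFun hcontra k
    have hroot := auxMemRoots hv0 (hpd.1.mulVec_eigenvectorBasis i0)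
    have h1 := heig _ hs0 _ hroot
    by_contra h'
    push_neg at h'
    have : c * hpd.1.eigenvalues i0 ≤ 0 := mul_nonpos_of_nonpos_of_nonneg h' ht.le
    linarith
  -- basic positivity facts
  have hRpd : ∀ S : Finset (Fin n), S.Nonempty → (c • Q S - 1).PosDef := fun S hS =>
    auxPosDefSmulSubOne (hQpos S hS).1 hc (heig S hS)
  have hQdetU : ∀ S : Finset (Fin n), S.Nonempty → IsUnit (Q S).det := fun S hS =>
    (Matrix.isUnit_iff_isUnit_det _).mp (hQpos S hS).isUnit
  have hRdetU : ∀ S : Finset (Fin n), S.Nonempty → IsUnit (c • Q S - 1).det := fun S hS =>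
    (Matrix.isUnit_iff_isUnit_det _).mp (hRpd S hS).isUnit
  have hQoff : ∀ (S : Finset (Fin n)) i j, i ≠ j → Q S i j ≤ 0 := by
    intro S i j hij
    rw [hQdef]
    simp only [Matrix.add_apply, Matrix.diagonal_apply_ne _ hij, add_zero]
    exact hLoff i j hij
  have hRoff : ∀ (S : Finset (Fin n)) i j, i ≠ j → (c • Q S - 1) i j ≤ 0 := by
    intro S i j hij
    simp only [Matrix.sub_apply, Matrix.smul_apply, Matrix.one_apply_ne hij, sub_zero,
      smul_eq_mul]
    exact mul_nonpos_of_nonneg_of_nonpos hc.le (hQoff S i j hij)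
  have hPnn : ∀ S : Finset (Fin n), S.Nonempty → ∀ i j, 0 ≤ (Q S)⁻¹ i j := fun S hS =>
    auxInvNonneg (hQpos S hS) (hQoff S)
  have hWnn : ∀ S : Finset (Fin n), S.Nonempty → ∀ i j, 0 ≤ (c • Q S - 1)⁻¹ i j := fun S hS =>
    auxInvNonneg (hRpd S hS) (hRoff S)
  -- entrywise nonnegativity of the difference Q Y - Q X for X ⊆ Y
  have hQdiffnn : ∀ X Y : Finset (Fin n), X ⊆ Y → ∀ i j, 0 ≤ (Q Y - Q X) i j := by
    intro X Y hXY i j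
    rw [hQdef, hQdef]
    simp only [Matrix.sub_apply, Matrix.add_apply, add_sub_add_left_eq_sub]
    by_cases hij : i = j
    · subst hij
      simp only [Matrix.diagonal_apply_eq]
      by_cases hX : i ∈ X
      · simp [hX, hXY hX]
      · by_cases hY : i ∈ Y <;> simp [hX, hY, (hκ i).le]
    · simp [Matrix.diagonal_apply_ne _ hij]
  have hRdiffnn : ∀ X Y : Finset (Fin n), X ⊆ Y →
      ∀ i j, 0 ≤ ((c • Q Y - 1) - (c • Q X - 1)) i j := by
    intro X Y hXY i j
    have h1 : (c • Q Y - 1) - (c • Q X - 1) = c • (Q Y - Q X) := by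
      rw [smul_sub]; abel
    rw [h1]
    simp only [Matrix.smul_apply, smul_eq_mul]
    exact mul_nonneg hc.le (hQdiffnn X Y hXY i j)
  -- entrywise monotonicity of inverses
  have hPle : ∀ X Y : Finset (Fin n), X.Nonempty → X ⊆ Y →
      ∀ i j, (Q Y)⁻¹ i j ≤ (Q X)⁻¹ i j := by
    intro X Y hX hXY i j
    have hY : Y.Nonempty := hX.mono hXY
    have hd := auxInvSub (Q X) (Q Y) (hQdetU X hX) (hQdetU Y hY)
    have h1 : 0 ≤ ((Q X)⁻¹ * (Q Y - Q X) * (Q Y)⁻¹) i j :=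
      auxMulNonneg (auxMulNonneg (hPnn X hX) (hQdiffnn X Y hXY)) (hPnn Y hY) i j
    rw [← hd, Matrix.sub_apply] at h1
    linarith
  have hWle : ∀ X Y : Finset (Fin n), X.Nonempty → X ⊆ Y →
      ∀ i j, (c • Q Y - 1)⁻¹ i j ≤ (c • Q X - 1)⁻¹ i j := by
    intro X Y hX hXY i j
    have hY : Y.Nonempty := hX.mono hXY
    have hd := auxInvSub (c • Q X - 1) (c • Q Y - 1) (hRdetU X hX) (hRdetU Y hY)
    have h1 : 0 ≤ ((c • Q X - 1)⁻¹ * ((c • Q Y - 1) - (c • Q X - 1)) * (c • Q Y - 1)⁻¹) i j :=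
      auxMulNonneg (auxMulNonneg (hWnn X hX) (hRdiffnn X Y hXY)) (hWnn Y hY) i j
    rw [← hd, Matrix.sub_apply] at h1
    linarith
  -- the simplified coherence function
  set Hf : Finset (Fin n) → ℝ := fun S =>
    Matrix.trace ((Q S)⁻¹ * (Q S)⁻¹) + b2 * Matrix.trace ((Q S)⁻¹ * (c • Q S - 1)⁻¹)
    with hHfdef
  have hHrw : ∀ S : Finset (Fin n), S.Nonempty →
      Matrix.trace ((Q S)⁻¹ * (Q S)⁻¹ * (b1 • Q S - 1) * (c • Q S - 1)⁻¹) = Hf S := by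
    intro S hS
    have h1 : b1 • Q S - (1 : Matrix (Fin n) (Fin n) ℝ) = (c • Q S - 1) + b2 • Q S := by
      rw [hcdef, sub_smul]; abel
    have h2 : (Q S)⁻¹ * (Q S)⁻¹ * ((c • Q S - 1) + b2 • Q S) * (c • Q S - 1)⁻¹
        = (Q S)⁻¹ * (Q S)⁻¹ + b2 • ((Q S)⁻¹ * (c • Q S - 1)⁻¹) := by
      rw [Matrix.mul_add, Matrix.add_mul]
      congr 1
      · rw [Matrix.mul_assoc, Matrix.mul_nonsing_inv _ (hRdetU S hS), Matrix.mul_one]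
      · rw [Matrix.mul_smul, Matrix.smul_mul]
        congr 1
        rw [Matrix.mul_assoc (Q S)⁻¹ (Q S)⁻¹ (Q S),
          Matrix.nonsing_inv_mul _ (hQdetU S hS), Matrix.mul_one]
    rw [h1, h2, Matrix.trace_add, Matrix.trace_smul, smul_eq_mul, hHfdef]
  have hfH : ∀ S : Finset (Fin n), S.Nonempty → f₄ S = 2 * mx - Hf S := by
    intro S hS
    rw [hf S hS, hHrw S hS]
  -- nonnegativity of Hf
  have hHf0 : ∀ S : Finset (Fin n), S.Nonempty → 0 ≤ Hf S := by
    intro S hS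
    have t1 : 0 ≤ Matrix.trace ((Q S)⁻¹ * (Q S)⁻¹) :=
      auxTraceNonneg (auxMulNonneg (hPnn S hS) (hPnn S hS))
    have t2 : 0 ≤ Matrix.trace ((Q S)⁻¹ * (c • Q S - 1)⁻¹) :=
      auxTraceNonneg (auxMulNonneg (hPnn S hS) (hWnn S hS))
    have := mul_nonneg hb2pos.le t2
    rw [hHfdef]
    dsimp only
    linarith
  -- the marginal formula
  have hform : ∀ (a : Fin n) (Z : Finset (Fin n)), Z.Nonempty → a ∉ Z →
      Hf Z - Hf (Z ∪ {a}) =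
      Matrix.trace ((Q Z)⁻¹ * Matrix.diagonal (fun i => if i = a then κ a else 0)
          * ((Q (Z ∪ {a}))⁻¹ * (Q Z)⁻¹))
      + Matrix.trace (((Q (Z ∪ {a}))⁻¹ * (Q Z)⁻¹)
          * Matrix.diagonal (fun i => if i = a then κ a else 0) * (Q (Z ∪ {a}))⁻¹)
      + b2 * Matrix.trace ((Q Z)⁻¹ * Matrix.diagonal (fun i => if i = a then κ a else 0)
          * ((Q (Z ∪ {a}))⁻¹ * (c • Q Z - 1)⁻¹))
      + b2 * Matrix.trace (((Q (Z ∪ {a}))⁻¹ * (c • Q Z - 1)⁻¹)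
          * Matrix.diagonal (fun i => c * (if i = a then κ a else 0)) * (c • Q (Z ∪ {a}) - 1)⁻¹) := by
    intro a Z hZ haZ
    have hZ' : (Z ∪ {a}).Nonempty := hZ.mono Finset.subset_union_left
    have hQeq : Q (Z ∪ {a}) = Q Z + Matrix.diagonal (fun i => if i = a then κ a else 0) := by
      have hd : (fun i => if i ∈ Z ∪ {a} then κ i else 0)
          = fun i => (if i ∈ Z then κ i else 0) + (if i = a then κ a else 0) := by
        funext i
        by_cases hia : i = a
        · subst hia; simp [Finset.mem_union, Finset.mem_singleton, haZ]
        · simp [Finset.mem_union, Finset.mem_singleton, hia]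
      rw [hQdef (Z ∪ {a}), hQdef Z, hd, ← Matrix.diagonal_add, add_assoc]
    have hReq : c • Q (Z ∪ {a}) - 1 = (c • Q Z - 1)
        + Matrix.diagonal (fun i => c * (if i = a then κ a else 0)) := by
      rw [hQeq, smul_add, ← Matrix.diagonal_smul]
      have : (c • fun i => if i = a then κ a else 0) = fun i => c * (if i = a then κ a else 0) :=
        rfl
      rw [this]
      abel
    have hPdiff : (Q Z)⁻¹ - (Q (Z ∪ {a}))⁻¹ =
        (Q Z)⁻¹ * Matrix.diagonal (fun i => if i = a then κ a else 0) * (Q (Z ∪ {a}))⁻¹ := by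
      have h := auxInvSub (Q Z) (Q (Z ∪ {a})) (hQdetU Z hZ) (hQdetU _ hZ')
      rw [hQeq, add_sub_cancel_left, ← hQeq] at h
      exact h
    have hWdiff : (c • Q Z - 1)⁻¹ - (c • Q (Z ∪ {a}) - 1)⁻¹ =
        (c • Q Z - 1)⁻¹ * Matrix.diagonal (fun i => c * (if i = a then κ a else 0))
          * (c • Q (Z ∪ {a}) - 1)⁻¹ := by
      have h := auxInvSub (c • Q Z - 1) (c • Q (Z ∪ {a}) - 1) (hRdetU Z hZ) (hRdetU _ hZ')
      rw [hReq, add_sub_cancel_left, ← hReq] at h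
      exact h
    have := auxMargFormula b2 ((Q Z)⁻¹) ((Q (Z ∪ {a}))⁻¹) ((c • Q Z - 1)⁻¹)
      ((c • Q (Z ∪ {a}) - 1)⁻¹) (Matrix.diagonal (fun i => if i = a then κ a else 0))
      (Matrix.diagonal (fun i => c * (if i = a then κ a else 0))) hPdiff hWdiff
    rw [hHfdef]
    dsimp only
    linarith
  -- nonnegativity of single-element marginals
  have hstep0 : ∀ (Z : Finset (Fin n)) (a : Fin n), Z.Nonempty → a ∉ Z →
      0 ≤ Hf Z - Hf (Z ∪ {a}) := by
    intro Z a hZ haZ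
    have hZ' : (Z ∪ {a}).Nonempty := hZ.mono Finset.subset_union_left
    rw [hform a Z hZ haZ]
    exact auxMargNonneg hb2pos.le
      (fun k => by by_cases h : k = a <;> simp [h, (hκ a).le])
      (fun k => by by_cases h : k = a <;> simp [h, mul_nonneg hc.le (hκ a).le])
      (hPnn Z hZ) (hPnn _ hZ') (hWnn Z hZ) (hWnn _ hZ')
  -- diminishing marginals
  have hstep : ∀ (X Y : Finset (Fin n)) (a : Fin n), X.Nonempty → X ⊆ Y → a ∉ Y →
      Hf Y - Hf (Y ∪ {a}) ≤ Hf X - Hf (X ∪ {a}) := by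
    intro X Y a hX hXY haY
    have hY : Y.Nonempty := hX.mono hXY
    have hX' : (X ∪ {a}).Nonempty := hX.mono Finset.subset_union_left
    have hY' : (Y ∪ {a}).Nonempty := hY.mono Finset.subset_union_left
    have haX : a ∉ X := fun h => haY (hXY h)
    have hXY' : X ∪ {a} ⊆ Y ∪ {a} := Finset.union_subset_union hXY (Finset.Subset.refl _)
    rw [hform a X hX haX, hform a Y hY haY]
    exact auxMargCompare hb2pos.le
      (fun k => by by_cases h : k = a <;> simp [h, (hκ a).le])
      (fun k => by by_cases h : k = a <;> simp [h, mul_nonneg hc.le (hκ a).le])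
      (hPnn Y hY) (hPnn _ hY') (hWnn Y hY) (hWnn _ hY')
      (hPle X Y hX hXY) (hPle _ _ hX' hXY') (hWle X Y hX hXY) (hWle _ _ hX' hXY')
  -- single-step monotonicity, arbitrary element
  have hstep1 : ∀ (Z : Finset (Fin n)) (a : Fin n), Z.Nonempty → Hf (Z ∪ {a}) ≤ Hf Z := by
    intro Z a hZ
    by_cases haZ : a ∈ Z
    · have : Z ∪ {a} = Z := by
        apply Finset.union_eq_left.mpr
        intro x hx
        rw [Finset.mem_singleton] at hx
        subst hx; exact haZ
      rw [this]
    · have := hstep0 Z a hZ haZ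
      linarith
  -- monotonicity under unions
  have hmono_union : ∀ (T X : Finset (Fin n)), X.Nonempty → Hf (X ∪ T) ≤ Hf X := by
    intro T
    induction T using Finset.induction_on with
    | empty => intro X hX; rw [Finset.union_empty]
    | @insert a s ha IH =>
      intro X hX
      have h1 : X ∪ insert a s = (X ∪ {a}) ∪ s := by
        rw [Finset.insert_eq, ← Finset.union_assoc]
      rw [h1]
      have hXa : (X ∪ {a}).Nonempty := hX.mono Finset.subset_union_left
      exact le_trans (IH (X ∪ {a}) hXa) (hstep1 X a hX)
  have hmono : ∀ A B : Finset (Fin n), A.Nonempty → A ⊆ B → Hf B ≤ Hf A := by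
    intro A B hA hAB
    have h1 : B = A ∪ (B \ A) := by
      rw [Finset.union_sdiff_of_subset hAB]
    rw [h1]
    exact hmono_union _ _ hA
  -- telescoped diminishing marginals
  have hchain : ∀ (T X Y : Finset (Fin n)), X.Nonempty → X ⊆ Y → Disjoint Y T →
      Hf Y - Hf (Y ∪ T) ≤ Hf X - Hf (X ∪ T) := by
    intro T
    induction T using Finset.induction_on with
    | empty =>
      intro X Y hX hXY hd
      rw [Finset.union_empty, Finset.union_empty]
      simp
    | @insert a s ha IH =>
      intro X Y hX hXY hd
      rw [Finset.disjoint_insert_right] at hd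
      obtain ⟨haY, hds⟩ := hd
      have haX : a ∉ X := fun h => haY (hXY h)
      have hXa : (X ∪ {a}).Nonempty := hX.mono Finset.subset_union_left
      have hXYa : X ∪ {a} ⊆ Y ∪ {a} := Finset.union_subset_union hXY (Finset.Subset.refl _)
      have hdsa : Disjoint (Y ∪ {a}) s := by
        rw [Finset.disjoint_union_left]
        exact ⟨hds, by rw [Finset.disjoint_singleton_left]; exact ha⟩
      have h1 : X ∪ insert a s = (X ∪ {a}) ∪ s := by
        rw [Finset.insert_eq, ← Finset.union_assoc]
      have h2 : Y ∪ insert a s = (Y ∪ {a}) ∪ s := by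
        rw [Finset.insert_eq, ← Finset.union_assoc]
      rw [h1, h2]
      have i1 := hstep X Y a hX hXY haY
      have i2 := IH (X ∪ {a}) (Y ∪ {a}) hXa hXYa hdsa
      linarith
  -- upper bound by mx
  have hub : ∀ S : Finset (Fin n), S.Nonempty → Hf S ≤ mx := by
    intro S hS
    obtain ⟨s, hs⟩ := hS
    have hsing : ({s} : Finset (Fin n)).Nonempty := ⟨s, Finset.mem_singleton_self s⟩
    have h1 : Hf S ≤ Hf {s} := by
      apply hmono {s} S hsing
      intro x hx
      rw [Finset.mem_singleton] at hx
      subst hx; exact hs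
    have h2 : Matrix.trace ((Q {s})⁻¹ * (Q {s})⁻¹ * (b1 • Q {s} - 1) * (c • Q {s} - 1)⁻¹) ≤ mx :=
      hmx.2 ⟨s, rfl⟩
    rw [hHrw {s} hsing] at h2
    linarith
  have hmx0 : 0 ≤ mx := by
    obtain ⟨s, hs⟩ := hmx.1
    have hsing : ({s} : Finset (Fin n)).Nonempty := ⟨s, Finset.mem_singleton_self s⟩
    rw [hHrw {s} hsing] at hs
    rw [hs]
    exact hHf0 _ hsing
  constructor
  · -- monotonicity
    intro A B hAB
    by_cases hA : A = ∅
    · subst hA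
      rw [hf0]
      by_cases hB : B = ∅
      · subst hB; rw [hf0]
      · have hBne : B.Nonempty := Finset.nonempty_iff_ne_empty.mpr hB
        rw [hfH B hBne]
        have := hub B hBne
        linarith
    · have hAne : A.Nonempty := Finset.nonempty_iff_ne_empty.mpr hA
      have hBne : B.Nonempty := hAne.mono hAB
      rw [hfH A hAne, hfH B hBne]
      have := hmono A B hAne hAB
      linarith
  · -- submodularity
    intro A B
    by_cases hA : A = ∅
    · subst hA
      rw [Finset.empty_union, Finset.empty_inter, hf0]
      try linarith
    by_cases hB : B = ∅
    · subst hB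
      rw [Finset.union_empty, Finset.inter_empty, hf0]
      try linarith
    have hAne : A.Nonempty := Finset.nonempty_iff_ne_empty.mpr hA
    have hBne : B.Nonempty := Finset.nonempty_iff_ne_empty.mpr hB
    have hABne : (A ∪ B).Nonempty := hAne.mono Finset.subset_union_left
    by_cases hC : A ∩ B = ∅
    · rw [hC, hf0, hfH A hAne, hfH B hBne, hfH (A ∪ B) hABne]
      have h1 := hub A hAne
      have h2 := hub B hBne
      have h3 := hHf0 (A ∪ B) hABne
      linarith
    · have hCne : (A ∩ B).Nonempty := Finset.nonempty_iff_ne_empty.mpr hC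
      have h1 := hchain (A \ B) (A ∩ B) B hCne Finset.inter_subset_right
        (Finset.disjoint_sdiff)
      have e1 : B ∪ A \ B = A ∪ B := by
        rw [Finset.union_sdiff_self_eq_union, Finset.union_comm]
      have e2 : (A ∩ B) ∪ A \ B = A := by
        rw [Finset.union_comm, Finset.sdiff_union_inter]
      rw [e1, e2] at h1
      rw [hfH A hAne, hfH B hBne, hfH (A ∪ B) hABne, hfH (A ∩ B) hCne]
      linarith
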